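/- Let α ∈ (0,1] and λ ∈ ℂ. For all z ∈ (0,∞), d/dz E_{α,1}(λ z^α) = λ z^{α−1} E_{α,α}(λ z^α). -/

import Mathlib

/-- Two-parameter Mittag-Leffler function. -/
noncomputable def mittagLeffler (α β z : ℂ) : ℂ :=
  ∑' k : ℕ, z ^ k / Complex.Gamma (β + α * k)

open Real Filter

lemma gamma_convex_ineq {α x : ℝ} (hα : 0 < α) (hα1 : α ≤ 1) (hx : 0 < x) :
    x * Real.Gamma x ≤ Real.Gamma (x + α) * (x + α) ^ (1 - α) := by
  have hxα : 0 < x + α := by linarith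
  have hG : 0 < Real.Gamma (x + α) := Real.Gamma_pos_of_pos hxα
  have hG1 : 0 < Real.Gamma (x + α + 1) := Real.Gamma_pos_of_pos (by linarith)
  have hGx1 : 0 < Real.Gamma (x + 1) := Real.Gamma_pos_of_pos (by linarith)
  have hc := Real.convexOn_log_Gamma.2 (Set.mem_Ioi.mpr hxα)
    (Set.mem_Ioi.mpr (show (0:ℝ) < x + α + 1 by linarith)) hα.le
    (by linarith : (0:ℝ) ≤ 1 - α) (by ring)
  have hcomb : α • (x + α) + (1 - α) • (x + α + 1) = x + 1 := by
    simp only [smul_eq_mul]; ring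
  rw [hcomb] at hc
  simp only [Function.comp, smul_eq_mul] at hc
  rw [mul_comm α, mul_comm (1 - α)] at hc
  have hexp := Real.exp_le_exp.mpr hc
  rw [Real.exp_log hGx1, Real.exp_add, ← Real.rpow_def_of_pos hG,
    ← Real.rpow_def_of_pos hG1] at hexp
  rw [Real.Gamma_add_one hx.ne'] at hexp
  rw [Real.Gamma_add_one hxα.ne', Real.mul_rpow hxα.le hG.le] at hexp
  calc x * Real.Gamma x
      ≤ Real.Gamma (x + α) ^ α * ((x + α) ^ (1 - α) * Real.Gamma (x + α) ^ (1 - α)) := hexp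
    _ = Real.Gamma (x + α) ^ (α + (1 - α)) * (x + α) ^ (1 - α) := by
        rw [Real.rpow_add hG]; ring
    _ = Real.Gamma (x + α) * (x + α) ^ (1 - α) := by norm_num

lemma gamma_div_le {α x : ℝ} (hα : 0 < α) (hα1 : α ≤ 1) (hx : 1 ≤ x) :
    Real.Gamma x / Real.Gamma (x + α) ≤ 2 * (x + α) ^ (-α) := by
  have hx0 : 0 < x := by linarith
  have hxα : 0 < x + α := by linarith
  have hG : 0 < Real.Gamma (x + α) := Real.Gamma_pos_of_pos hxα
  have hA : 0 < (x + α) ^ (1 - α) := Real.rpow_pos_of_pos hxα _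
  have key := gamma_convex_ineq hα hα1 hx0
  have h1 : Real.Gamma x / Real.Gamma (x + α) ≤ (x + α) ^ (1 - α) / x := by
    rw [div_le_div_iff₀ hG hx0]; linarith
  refine h1.trans ?_
  have hrw : (x + α) ^ (-α) = (x + α) ^ (1 - α) / (x + α) := by
    rw [show -α = (1 - α) - 1 by ring, Real.rpow_sub hxα, Real.rpow_one]
  rw [hrw, mul_div_assoc']
  rw [div_le_div_iff₀ hx0 hxα]
  nlinarith

lemma summable_aux {α : ℝ} (hα : 0 < α) (hα1 : α ≤ 1) {C : ℝ} (hC : 0 < C) :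
    Summable (fun k : ℕ => ((k : ℝ) + 1) * C ^ k / Real.Gamma (1 + α * k)) := by
  have hx : ∀ k : ℕ, (0:ℝ) < 1 + α * k := fun k => by positivity
  have hGpos : ∀ k : ℕ, 0 < Real.Gamma (1 + α * k) := fun k => Real.Gamma_pos_of_pos (hx k)
  have hpos : ∀ k : ℕ, (0:ℝ) < ((k : ℝ) + 1) * C ^ k / Real.Gamma (1 + α * k) := fun k => by
    have := hGpos k; positivity
  apply summable_of_ratio_test_tendsto_lt_one (l := 0) one_pos
    (Eventually.of_forall fun n => (hpos n).ne')
  have hb : ∀ n : ℕ, ‖((n : ℝ) + 1 + 1) * C ^ (n+1) / Real.Gamma (1 + α * (n+1))‖ /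
      ‖((n : ℝ) + 1) * C ^ n / Real.Gamma (1 + α * n)‖ ≤ 4 * C * (1 + α * n + α) ^ (-α) := by
    intro n
    have h1 := hpos n
    have h2 := hpos (n + 1)
    push_cast at h2 ⊢
    rw [Real.norm_of_nonneg h2.le, Real.norm_of_nonneg h1.le, div_le_iff₀ h1]
    have hrec : (1 : ℝ) + α * (n + 1) = (1 + α * n) + α := by ring
    rw [hrec]
    have hdiv := gamma_div_le hα hα1 (le_add_of_nonneg_right (by positivity) : (1:ℝ) ≤ 1 + α * n)
    have hGα : 0 < Real.Gamma (1 + α * n + α) := Real.Gamma_pos_of_pos (by positivity)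
    have h3 : (1:ℝ)/Real.Gamma (1 + α * n + α) ≤
        2 * (1 + α * n + α) ^ (-α) / Real.Gamma (1 + α * n) := by
      rw [div_le_div_iff₀ hGα (hGpos n)]
      calc 1 * Real.Gamma (1 + α * n)
          = (Real.Gamma (1 + α * n) / Real.Gamma (1 + α * n + α)) * Real.Gamma (1 + α * n + α) := by
            field_simp
        _ ≤ 2 * (1 + α * n + α) ^ (-α) * Real.Gamma (1 + α * n + α) :=
            mul_le_mul_of_nonneg_right hdiv hGα.le
    calc ((n:ℝ) + 1 + 1) * C ^ (n+1) / Real.Gamma (1 + α * n + α)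
        = ((n:ℝ) + 1 + 1) * C ^ (n+1) * (1 / Real.Gamma (1 + α * n + α)) := by ring
      _ ≤ (2*((n:ℝ) + 1)) * (C * C ^ n) * (2 * (1 + α * n + α) ^ (-α) / Real.Gamma (1 + α * n)) := by
          apply mul_le_mul ?_ h3 (by positivity) (by positivity)
          rw [pow_succ, mul_comm (C ^ n) C]
          apply mul_le_mul (by linarith) le_rfl (by positivity) (by positivity)
      _ = 4 * C * (1 + α * n + α) ^ (-α) * (((n:ℝ) + 1) * C ^ n / Real.Gamma (1 + α * n)) := by
          ring
  have hb0 : ∀ n : ℕ, 0 ≤ ‖((n : ℝ) + 1 + 1) * C ^ (n+1) / Real.Gamma (1 + α * (n+1))‖ /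
      ‖((n : ℝ) + 1) * C ^ n / Real.Gamma (1 + α * n)‖ := fun n => by positivity
  have htend : Tendsto (fun n : ℕ => 4 * C * (1 + α * n + α) ^ (-α)) atTop (nhds 0) := by
    have h1 : Tendsto (fun n : ℕ => (1 + α * n + α : ℝ)) atTop atTop := by
      apply Filter.tendsto_atTop_add_const_right
      apply Filter.tendsto_atTop_add_const_left
      exact (tendsto_natCast_atTop_atTop).const_mul_atTop hα
    have h2 := (tendsto_rpow_neg_atTop hα).comp h1
    simpa using h2.const_mul (4 * C)
  have := squeeze_zero hb0 (fun n => by simpa using hb n) htend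
  convert this using 2 with n
  push_cast
  ring_nf

theorem deriv_mittagLeffler (α : ℝ) (hα : α ∈ Set.Ioc (0 : ℝ) 1) (l : ℂ)
    (z : ℝ) (hz : 0 < z) :
    HasDerivAt (fun t : ℝ => mittagLeffler (α : ℂ) 1 (l * ((t ^ α : ℝ) : ℂ)))
      (l * ((z ^ (α - 1) : ℝ) : ℂ) * mittagLeffler (α : ℂ) (α : ℂ) (l * ((z ^ α : ℝ) : ℂ)))
      z := by
  obtain ⟨hα0, hα1⟩ := hα
  set t : Set ℝ := Set.Ioo (z/2) (z+1) with ht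
  have hzt : z ∈ t := ⟨by linarith, by linarith⟩
  set C : ℝ := (‖l‖ + 1) * ((z+1) ^ α) + 1 with hC
  have hCpos : 0 < C := by
    have : (0:ℝ) < (z+1) ^ α := Real.rpow_pos_of_pos (by linarith) _
    positivity
  have hC1 : 1 ≤ C := by
    have h1 : (0:ℝ) < (z+1) ^ α := Real.rpow_pos_of_pos (by linarith) _
    nlinarith [norm_nonneg l]
  set B : ℝ := α * (z/2) ^ (α-1) with hB
  have hBpos : 0 < B := by
    have : (0:ℝ) < (z/2) ^ (α-1) := Real.rpow_pos_of_pos (by linarith) _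
    positivity
  -- the summable bound
  set u : ℕ → ℝ := fun n => ((n:ℝ)+1) * C ^ n * ((‖l‖+1) * B) / Real.Gamma (1 + α * n) with hu_def
  have hu : Summable u := by
    have := (summable_aux hα0 hα1 hCpos).mul_right ((‖l‖+1) * B)
    apply this.congr
    intro n
    simp only [hu_def]
    ring
  -- Gamma facts
  have hGamma_eq : ∀ n : ℕ, Complex.Gamma (1 + (α:ℂ) * n) = ((Real.Gamma (1 + α * n) : ℝ) : ℂ) := by
    intro n
    have : (1 + (α:ℂ) * n) = ((1 + α * n : ℝ) : ℂ) := by push_cast; ring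
    rw [this, Complex.Gamma_ofReal]
  have hGpos : ∀ n : ℕ, 0 < Real.Gamma (1 + α * n) := fun n =>
    Real.Gamma_pos_of_pos (by positivity)
  -- the functions and their derivatives
  set g : ℕ → ℝ → ℂ := fun n s => (l * ((s ^ α : ℝ) : ℂ)) ^ n / Complex.Gamma (1 + (α:ℂ) * n)
    with hg_def
  set g' : ℕ → ℝ → ℂ := fun n s =>
    ((n:ℂ) * (l * ((s ^ α : ℝ) : ℂ)) ^ (n-1) * (l * ((α * s ^ (α-1) : ℝ) : ℂ))) /
      Complex.Gamma (1 + (α:ℂ) * n) with hg'_def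
  have hg : ∀ n : ℕ, ∀ y ∈ t, HasDerivAt (g n) (g' n y) y := by
    intro n y hy
    have hy0 : 0 < y := lt_trans (by linarith) hy.1
    have h1 : HasDerivAt (fun s : ℝ => s ^ α) (α * y ^ (α-1)) y :=
      Real.hasDerivAt_rpow_const (Or.inl hy0.ne')
    have h2 := h1.ofReal_comp
    have h3 := HasDerivAt.const_mul l h2
    have h4 : HasDerivAt (fun s : ℝ => (l * ((s ^ α : ℝ) : ℂ)) ^ n)
        ((l * ((α * y ^ (α-1) : ℝ) : ℂ)) * ((n:ℂ) * (l * ((y ^ α : ℝ) : ℂ)) ^ (n-1))) y := by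
      have h5 := HasDerivAt.scomp (x := y)
        (hasDerivAt_pow n (l * ((y ^ α : ℝ) : ℂ))) h3
      simpa [smul_eq_mul, Function.comp_def] using h5
    have h6 := h4.div_const (Complex.Gamma (1 + (α:ℂ) * n))
    simp only [hg'_def]
    convert h6 using 1
    rfl
    ring
  -- norm bound
  have hwle : ∀ y ∈ t, ‖l‖ * y ^ α ≤ C := by
    intro y hy
    have hy0 : 0 < y := lt_trans (by linarith) hy.1
    have h1 : y ^ α ≤ (z+1) ^ α := Real.rpow_le_rpow hy0.le hy.2.le hα0.le
    have h2 : (0:ℝ) ≤ y ^ α := Real.rpow_nonneg hy0.le _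
    nlinarith [norm_nonneg l, Real.rpow_pos_of_pos (show (0:ℝ) < z+1 by linarith) α]
  have hg' : ∀ n : ℕ, ∀ y ∈ t, ‖g' n y‖ ≤ u n := by
    intro n y hy
    have hy0 : 0 < y := lt_trans (by linarith) hy.1
    simp only [hg'_def, hu_def]
    rw [norm_div, hGamma_eq, Complex.norm_real, Real.norm_of_nonneg (hGpos n).le]
    gcongr
    simp only [norm_mul, norm_pow, Complex.norm_natCast, Complex.norm_real]
    rw [Real.norm_of_nonneg hα0.le,
      Real.norm_of_nonneg (Real.rpow_nonneg hy0.le (α-1)),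
      Real.norm_of_nonneg (Real.rpow_nonneg hy0.le α)]
    have hA : (‖l‖ * y ^ α) ^ (n-1) ≤ C ^ n := by
      calc (‖l‖ * y ^ α) ^ (n-1) ≤ C ^ (n-1) :=
            pow_le_pow_left₀ (by positivity) (hwle y hy) _
        _ ≤ C ^ n := pow_le_pow_right₀ hC1 (Nat.sub_le n 1)
    have hBy : α * y ^ (α-1) ≤ B := by
      have := Real.rpow_le_rpow_of_nonpos (by linarith : (0:ℝ) < z/2) hy.1.le
        (by linarith : α - 1 ≤ 0)
      rw [hB]
      nlinarith
    exact mul_le_mul (mul_le_mul (by simp) hA (by positivity) (by positivity))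
      (mul_le_mul (by linarith) hBy (by positivity) (by positivity))
      (by positivity) (by positivity)
  -- summability at z
  have hg0 : Summable fun n => g n z := by
    apply Summable.of_norm_bounded ((summable_aux hα0 hα1 hCpos))
    intro n
    simp only [hg_def]
    rw [norm_div, hGamma_eq, Complex.norm_real, Real.norm_of_nonneg (hGpos n).le]
    gcongr
    simp only [norm_pow, norm_mul, Complex.norm_real]
    rw [Real.norm_of_nonneg (Real.rpow_nonneg hz.le α)]
    calc (‖l‖ * z ^ α) ^ n ≤ C ^ n :=
          pow_le_pow_left₀ (by positivity) (hwle z hzt) _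
      _ ≤ ((n:ℝ)+1) * C ^ n := by nlinarith [pow_pos hCpos n]
  have main : HasDerivAt (fun s : ℝ => ∑' n, g n s) (∑' n, g' n z) z :=
    hasDerivAt_tsum_of_isPreconnected hu isOpen_Ioo isPreconnected_Ioo hg hg' hzt hg0 hzt
  -- identify the sum of derivatives
  have hs' : Summable fun n => g' n z :=
    Summable.of_norm_bounded hu fun n => hg' n z hzt
  have hterm : ∀ n : ℕ, g' (n+1) z =
      l * ((z ^ (α-1) : ℝ) : ℂ) *
        ((l * ((z ^ α : ℝ) : ℂ)) ^ n / Complex.Gamma ((α:ℂ) + (α:ℂ) * n)) := by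
    intro n
    have hsval : ((α:ℂ) + (α:ℂ) * n) = ((α + α * n : ℝ) : ℂ) := by push_cast; ring
    have hs0 : ((α:ℂ) + (α:ℂ) * n) ≠ 0 := by
      rw [hsval]
      exact Complex.ofReal_ne_zero.mpr (by positivity)
    have hGne : Complex.Gamma ((α:ℂ) + (α:ℂ) * n) ≠ 0 := by
      rw [hsval, Complex.Gamma_ofReal]
      exact Complex.ofReal_ne_zero.mpr (Real.Gamma_pos_of_pos (by positivity)).ne'
    simp only [hg'_def]
    have hrec : (1 : ℂ) + (α:ℂ) * ((n+1 : ℕ) : ℂ) = ((α:ℂ) + (α:ℂ) * n) + 1 := by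
      push_cast; ring
    rw [hrec, Complex.Gamma_add_one _ hs0]
    have hcast : ((α * z ^ (α-1) : ℝ) : ℂ) = (α:ℂ) * ((z ^ (α-1) : ℝ) : ℂ) := by push_cast; ring
    rw [hcast, Nat.add_sub_cancel]
    push_cast
    rw [mul_div_assoc', div_eq_div_iff (mul_ne_zero hs0 hGne) hGne]
    ring
  have hsum : (∑' n, g' n z) =
      l * ((z ^ (α - 1) : ℝ) : ℂ) * mittagLeffler (α : ℂ) (α : ℂ) (l * ((z ^ α : ℝ) : ℂ)) := by
    rw [Summable.tsum_eq_zero_add hs']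
    have h0 : g' 0 z = 0 := by simp [hg'_def]
    rw [h0, zero_add, tsum_congr hterm, tsum_mul_left]
    rfl
  rw [← hsum]
  exact main
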